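/- Let X be a real separable Hilbert space with orthonormal basis {e_n}, T ∈ L⁺(X) given by Tx = ∑_n λ_n^{1/2}⟨x,e_n⟩e_n with bounded positive λ_n. Then the SE-T kernel admits the expansion k_T(x,y) = ∑_{γ ∈ Γ} φ_γ(x)φ_γ(y), where Γ is the set of finitely-supported multi-indices over ℕ, φ_γ(x) = √(λ^γ/γ!)·exp(−(1/2)‖Tx‖²)·x^γ, x^γ = ∏_n ⟨x,e_n⟩^{γ_n}, λ^γ = ∏_n λ_n^{γ_n}, γ! = ∏_n γ_n!, and the sum converges pointwise. -/

import Mathlib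

open scoped RealInnerProductSpace
open Finset Filter

/-- Finite multinomial identity in the form we need. -/
private lemma finsupp_antidiag_sum_eq (a : ℕ → ℝ) (s : Finset ℕ) (m : ℕ) :
    ∑ γ ∈ Finset.finsuppAntidiag s m,
        (γ.prod fun n k => a n ^ k / (Nat.factorial k : ℝ)) =
      (∑ n ∈ s, a n) ^ m / (Nat.factorial m : ℝ) := by
  classical
  have h1 : ∑ γ ∈ Finset.finsuppAntidiag s m,
      (γ.prod fun n k => a n ^ k / (Nat.factorial k : ℝ))
      = ∑ f ∈ Finset.piAntidiag s m, ∏ n ∈ s, a n ^ f n / ((f n).factorial : ℝ) := by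
    rw [Finset.finsuppAntidiag, Finset.sum_map]
    rw [← Finset.sum_attach (Finset.piAntidiag s m)
      (fun f => ∏ n ∈ s, a n ^ f n / ((f n).factorial : ℝ))]
    refine Finset.sum_congr rfl fun f _ => ?_
    refine (Finsupp.prod_of_support_subset _ ?_ _ fun i _ => by simp).trans rfl
    exact Finset.filter_subset _ _
  rw [h1, Finset.sum_pow_eq_sum_piAntidiag, Finset.sum_div]
  refine Finset.sum_congr rfl fun f hf => ?_
  rw [Finset.mem_piAntidiag] at hf
  have hspec : ((∏ n ∈ s, (f n).factorial : ℕ) : ℝ) * (Nat.multinomial s f : ℝ)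
      = (Nat.factorial m : ℝ) := by
    rw [← Nat.cast_mul, Nat.multinomial_spec, hf.1]
  have hne : (∏ n ∈ s, ((f n).factorial : ℝ)) ≠ 0 := by positivity
  have hmne : (Nat.factorial m : ℝ) ≠ 0 := by positivity
  push_cast at hspec
  rw [Finset.prod_div_distrib, div_eq_div_iff hne hmne, ← hspec]
  ring

private lemma summable_finsupp_prod_of_nonneg {b : ℕ → ℝ} (hb : Summable b)
    (hb0 : ∀ n, 0 ≤ b n) :
    Summable fun γ : ℕ →₀ ℕ => γ.prod fun n k => b n ^ k / (Nat.factorial k : ℝ) := by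
  classical
  have hB0 : 0 ≤ ∑' n, b n := tsum_nonneg hb0
  have hnn : ∀ γ : ℕ →₀ ℕ, 0 ≤ γ.prod fun n k => b n ^ k / (Nat.factorial k : ℝ) := by
    intro γ
    exact Finset.prod_nonneg fun n _ => div_nonneg (pow_nonneg (hb0 n) _) (by positivity)
  refine summable_of_sum_le (c := Real.exp (∑' n, b n)) hnn fun u => ?_
  set s : Finset ℕ := u.sup Finsupp.support with hs
  set N : ℕ := u.sup fun γ => γ.sum fun _ k => k with hN
  have husub : u ⊆ (Finset.range (N + 1)).biUnion fun m => Finset.finsuppAntidiag s m := by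
    intro γ hγ
    have hsupp : γ.support ⊆ s := Finset.le_sup hγ
    refine Finset.mem_biUnion.2 ⟨γ.sum fun _ k => k,
      Finset.mem_range.2 (Nat.lt_succ_of_le (Finset.le_sup (f := fun γ : ℕ →₀ ℕ =>
        γ.sum fun _ k => k) hγ)), ?_⟩
    rw [Finset.mem_finsuppAntidiag]
    exact ⟨(Finsupp.sum_of_support_subset γ hsupp (fun _ k => k) fun _ _ => rfl).symm, hsupp⟩
  have hdisj : (↑(Finset.range (N + 1)) : Set ℕ).PairwiseDisjoint
      fun m => Finset.finsuppAntidiag s m := by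
    intro m _ m' _ hne
    refine Finset.disjoint_left.2 fun γ h1 h2 => hne ?_
    rw [Finset.mem_finsuppAntidiag] at h1 h2
    rw [← h1.1, ← h2.1]
  calc ∑ γ ∈ u, γ.prod (fun n k => b n ^ k / (Nat.factorial k : ℝ))
      ≤ ∑ γ ∈ (Finset.range (N + 1)).biUnion fun m => Finset.finsuppAntidiag s m,
          γ.prod (fun n k => b n ^ k / (Nat.factorial k : ℝ)) :=
        Finset.sum_le_sum_of_subset_of_nonneg husub fun γ _ _ => hnn γ
    _ = ∑ m ∈ Finset.range (N + 1), ∑ γ ∈ Finset.finsuppAntidiag s m,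
          γ.prod (fun n k => b n ^ k / (Nat.factorial k : ℝ)) := Finset.sum_biUnion hdisj
    _ = ∑ m ∈ Finset.range (N + 1), (∑ n ∈ s, b n) ^ m / (Nat.factorial m : ℝ) := by
        exact Finset.sum_congr rfl fun m _ => finsupp_antidiag_sum_eq b s m
    _ ≤ ∑ m ∈ Finset.range (N + 1), (∑' n, b n) ^ m / (Nat.factorial m : ℝ) := by
        refine Finset.sum_le_sum fun m _ => ?_
        gcongr
        · exact Finset.sum_nonneg fun n _ => hb0 n
        · exact Summable.sum_le_tsum s (fun n _ => hb0 n) hb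
    _ ≤ Real.exp (∑' n, b n) := Real.sum_le_exp_of_nonneg hB0 _

set_option maxHeartbeats 1000000 in
private lemma hasSum_exp_expansion {a : ℕ → ℝ} {S : ℝ} (ha : HasSum a S) :
    HasSum (fun γ : ℕ →₀ ℕ => γ.prod fun n k => a n ^ k / (Nat.factorial k : ℝ))
      (Real.exp S) := by
  classical
  set F : (ℕ →₀ ℕ) → ℝ := fun γ => γ.prod fun n k => a n ^ k / (Nat.factorial k : ℝ) with hFdef
  have habs : Summable fun n => |a n| := ha.summable.abs
  have hG : Summable fun γ : ℕ →₀ ℕ => γ.prod fun n k => |a n| ^ k / (Nat.factorial k : ℝ) :=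
    summable_finsupp_prod_of_nonneg habs fun n => abs_nonneg _
  have hFsummable : Summable F := by
    refine Summable.of_norm_bounded hG fun γ => ?_
    rw [Real.norm_eq_abs, hFdef]
    simp only [Finsupp.prod]
    rw [Finset.abs_prod]
    refine le_of_eq (Finset.prod_congr rfl fun n _ => ?_)
    rw [abs_div, abs_pow, Nat.abs_cast]
  have hexp : HasSum (fun m : ℕ => S ^ m / (Nat.factorial m : ℝ)) (Real.exp S) := by
    rw [Real.exp_eq_exp_ℝ]
    exact NormedSpace.expSeries_div_hasSum_exp S
  -- fiber sums
  have hfiber : ∀ m : ℕ,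
      HasSum (fun c : {γ : ℕ →₀ ℕ // (γ.sum fun _ k => k) = m} => F c.1)
        (S ^ m / (Nat.factorial m : ℝ)) := by
    intro m
    have hsub : Summable fun c : {γ : ℕ →₀ ℕ // (γ.sum fun _ k => k) = m} => F c.1 :=
      hFsummable.comp_injective Subtype.val_injective
    refine hsub.hasSum_iff.2 ?_
    set Φ : Finset ℕ → Finset {γ : ℕ →₀ ℕ // (γ.sum fun _ k => k) = m} :=
      fun s => (Finset.finsuppAntidiag s m).subtype fun γ => (γ.sum fun _ k => k) = m with hΦ
    have hmono : Monotone Φ := by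
      intro s t hst c hc
      simp only [hΦ, Finset.mem_subtype, Finset.mem_finsuppAntidiag] at hc ⊢
      obtain ⟨h1, h2⟩ := hc
      refine ⟨?_, h2.trans hst⟩
      have heq : ∑ x ∈ s, (c : ℕ →₀ ℕ) x = ∑ x ∈ t, (c : ℕ →₀ ℕ) x :=
        Finset.sum_subset hst fun x _ hxs =>
          Finsupp.notMem_support_iff.1 fun hmem => hxs (h2 hmem)
      exact heq.symm.trans h1
    have htend : Filter.Tendsto Φ Filter.atTop Filter.atTop := by
      refine tendsto_atTop_finset_of_monotone hmono fun c => ⟨(c : ℕ →₀ ℕ).support, ?_⟩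
      simp only [hΦ, Finset.mem_subtype, Finset.mem_finsuppAntidiag]
      refine ⟨?_, subset_rfl⟩
      exact (Finsupp.sum_of_support_subset (c : ℕ →₀ ℕ) subset_rfl (fun _ k => k)
        fun _ _ => rfl).symm.trans c.2
    have hkey : ∀ s : Finset ℕ,
        ∑ c ∈ Φ s, F c.1 = (∑ n ∈ s, a n) ^ m / (Nat.factorial m : ℝ) := by
      intro s
      have hmem : ∀ γ ∈ Finset.finsuppAntidiag s m, (γ.sum fun _ k => k) = m := by
        intro γ hγ
        rw [Finset.mem_finsuppAntidiag] at hγ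
        exact (Finsupp.sum_of_support_subset γ hγ.2 (fun _ k => k) fun _ _ => rfl).trans hγ.1
      rw [hΦ, Finset.sum_subtype_of_mem (fun γ => F γ) hmem]
      exact finsupp_antidiag_sum_eq a s m
    have h1 : Filter.Tendsto ((fun t : Finset {γ : ℕ →₀ ℕ // (γ.sum fun _ k => k) = m} =>
        ∑ c ∈ t, F c.1) ∘ Φ) Filter.atTop
        (nhds (∑' c : {γ : ℕ →₀ ℕ // (γ.sum fun _ k => k) = m}, F c.1)) :=
      hsub.hasSum.comp htend
    have heqfun : ((fun t : Finset {γ : ℕ →₀ ℕ // (γ.sum fun _ k => k) = m} =>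
        ∑ c ∈ t, F c.1) ∘ Φ)
        = fun s : Finset ℕ => (∑ n ∈ s, a n) ^ m / (Nat.factorial m : ℝ) := funext hkey
    rw [heqfun] at h1
    have h2 : Filter.Tendsto (fun s : Finset ℕ => (∑ n ∈ s, a n) ^ m / (Nat.factorial m : ℝ))
        Filter.atTop (nhds (S ^ m / (Nat.factorial m : ℝ))) := (ha.pow m).div_const _
    exact tendsto_nhds_unique h1 h2
  set σ : (Σ _m : ℕ, {γ : ℕ →₀ ℕ // (γ.sum fun _ k => k) = _m}) ≃ (ℕ →₀ ℕ) :=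
    Equiv.sigmaFiberEquiv (fun γ : ℕ →₀ ℕ => γ.sum fun _ k => k) with hσ
  have hFσ : Summable (F ∘ σ) := σ.summable_iff.2 hFsummable
  have hsigma : HasSum (F ∘ σ) (Real.exp S) :=
    HasSum.sigma_of_hasSum hexp hfiber hFσ
  exact σ.hasSum_iff.1 hsigma

set_option maxHeartbeats 1000000

/-- Let `X` be a real separable Hilbert space with Hilbert basis `{e_n}` and
`T x = ∑_n λ_n^{1/2} ⟨x, e_n⟩ e_n` with bounded positive coefficients `λ_n`. Then the SE-`T`
kernel admits the pointwise-convergent expansion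
`k_T(x,y) = ∑_{γ ∈ Γ} φ_γ(x) φ_γ(y)` over finitely supported multi-indices `γ : ℕ →₀ ℕ`,
where `φ_γ(x) = √(λ^γ/γ!) exp(−(1/2)‖Tx‖²) x^γ`, `x^γ = ∏_n ⟨x,e_n⟩^{γ_n}`,
`λ^γ = ∏_n λ_n^{γ_n}` and `γ! = ∏_n γ_n!`. -/
theorem seT_kernel_feature_expansion
    {X : Type*} [NormedAddCommGroup X] [InnerProductSpace ℝ X] [CompleteSpace X]
    [TopologicalSpace.SeparableSpace X]
    (e : HilbertBasis ℕ ℝ X) (lam : ℕ → ℝ) (hpos : ∀ n, 0 < lam n)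
    (hbdd : ∃ M : ℝ, ∀ n, lam n ≤ M)
    (T : X →L[ℝ] X)
    (hT : ∀ x : X, HasSum (fun n => (Real.sqrt (lam n) * ⟪x, e n⟫) • e n) (T x))
    (phi : (ℕ →₀ ℕ) → X → ℝ)
    (hphi : ∀ (g : ℕ →₀ ℕ) (x : X), phi g x =
      Real.sqrt ((g.prod fun n k => lam n ^ k) / (g.prod fun n k => (Nat.factorial k : ℝ))) *
        Real.exp (-(1/2) * ‖T x‖ ^ 2) * g.prod fun n k => (⟪x, e n⟫ : ℝ) ^ k) :
    ∀ x y : X, HasSum (fun g : ℕ →₀ ℕ => phi g x * phi g y)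
      (Real.exp (-(1/2) * ‖T x - T y‖ ^ 2)) := by
  intro x y
  classical
  -- Fourier coefficients of `T z`
  have hcoef : ∀ (z : X) (n : ℕ), ⟪T z, e n⟫ = Real.sqrt (lam n) * ⟪z, e n⟫ := by
    intro z n
    have h1 := (hT z).mapL (innerSL ℝ (e n))
    have h2 : HasSum (fun m => (Real.sqrt (lam m) * ⟪z, e m⟫) * ⟪e n, e m⟫) ⟪e n, T z⟫ := by
      simpa [inner_smul_right] using h1
    have hite := orthonormal_iff_ite.mp e.orthonormal
    have h3 : (fun m => (Real.sqrt (lam m) * ⟪z, e m⟫) * ⟪e n, e m⟫)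
        = fun m => if m = n then Real.sqrt (lam n) * ⟪z, e n⟫ else 0 := by
      funext m
      rcases eq_or_ne m n with h | h
      · subst h; simp [hite, e.orthonormal.1 m]
      · simp [hite n m, h, Ne.symm h]
    rw [h3] at h2
    rw [real_inner_comm]
    exact ((hasSum_ite_eq n (Real.sqrt (lam n) * ⟪z, e n⟫)).unique h2).symm
  -- Parseval
  have hpar : HasSum (fun n => lam n * (⟪x, e n⟫ * ⟪y, e n⟫)) ⟪T x, T y⟫ := by
    have h := e.hasSum_inner_mul_inner (T x) (T y)
    have heq : ∀ n, ⟪T x, e n⟫ * ⟪e n, T y⟫ = lam n * (⟪x, e n⟫ * ⟪y, e n⟫) := by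
      intro n
      have h3 : ⟪e n, T y⟫ = Real.sqrt (lam n) * ⟪y, e n⟫ := by
        rw [real_inner_comm]; exact hcoef y n
      rw [hcoef x n, h3]
      have hss : Real.sqrt (lam n) * Real.sqrt (lam n) = lam n :=
        Real.mul_self_sqrt (hpos n).le
      linear_combination (⟪x, e n⟫ * ⟪y, e n⟫) * hss
    simp only [heq] at h
    exact h
  have hcore := hasSum_exp_expansion hpar
  set C : ℝ := Real.exp (-(1/2) * ‖T x‖ ^ 2) * Real.exp (-(1/2) * ‖T y‖ ^ 2) with hC
  have hfinal := hcore.mul_left C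
  have hfun : (fun g : ℕ →₀ ℕ => phi g x * phi g y)
      = fun g : ℕ →₀ ℕ => C * g.prod fun n k =>
          (lam n * (⟪x, e n⟫ * ⟪y, e n⟫)) ^ k / (Nat.factorial k : ℝ) := by
    funext g
    rw [hphi, hphi, hC]
    set L : ℝ := g.prod fun n k => lam n ^ k with hL
    set Fc : ℝ := g.prod fun n k => (Nat.factorial k : ℝ) with hFc
    set Px : ℝ := g.prod fun n k => (⟪x, e n⟫ : ℝ) ^ k with hPx
    set Py : ℝ := g.prod fun n k => (⟪y, e n⟫ : ℝ) ^ k with hPy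
    have hL0 : 0 ≤ L := Finset.prod_nonneg fun n _ => pow_nonneg (hpos n).le _
    have hFc0 : 0 < Fc := Finset.prod_pos fun n _ => by positivity
    have hprod : (g.prod fun n k =>
        (lam n * (⟪x, e n⟫ * ⟪y, e n⟫)) ^ k / (Nat.factorial k : ℝ))
        = L * Px * Py / Fc := by
      rw [hL, hFc, hPx, hPy]
      simp only [Finsupp.prod]
      rw [← Finset.prod_mul_distrib, ← Finset.prod_mul_distrib, ← Finset.prod_div_distrib]
      refine Finset.prod_congr rfl fun n _ => ?_
      rw [mul_pow, mul_pow]; ring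
    rw [hprod]
    have hs : Real.sqrt (L / Fc) * Real.sqrt (L / Fc) = L / Fc :=
      Real.mul_self_sqrt (div_nonneg hL0 hFc0.le)
    linear_combination (Real.exp (-(1/2) * ‖T x‖ ^ 2) * Real.exp (-(1/2) * ‖T y‖ ^ 2)
      * Px * Py) * hs
  have hval : Real.exp (-(1/2) * ‖T x - T y‖ ^ 2) = C * Real.exp ⟪T x, T y⟫ := by
    rw [hC, ← Real.exp_add, ← Real.exp_add]
    congr 1
    rw [norm_sub_sq_real]
    ring
  rw [hfun, hval]
  exact hfinal
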